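/- arXiv:2004.11930 — 3 statements merged into one kernel-verified Lean document; each statement's English description precedes it below -/
import Mathlib

section
/- Every graph G on n vertices satisfies t(G) \ge (e(G)/(3n)) \cdot (4e(G) - n^2), where t(G) is the number of triangles and e(G) the number of edges of G. -/
open SimpleGraph

/-- `G` contains a copy of `H` (a subgraph isomorphic to `H`). -/
def containsCopy {W V : Type*} (H : SimpleGraph W) (G : SimpleGraph V) : Prop :=
  ∃ f : H →g G, Function.Injective f

/-- The number of triangles of `G`. -/
noncomputable def triCount {V : Type*} (G : SimpleGraph V) : ℕ :=
  {s : Finset V | G.IsNClique 3 s}.ncard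

/-- The number of edges of `G`. -/
noncomputable def edgeCount {V : Type*} (G : SimpleGraph V) : ℕ :=
  G.edgeSet.ncard

/-- The suspension `K_1 ∨ H` of a graph `H`: a new vertex (`none`) joined to all
vertices of `H`. -/
def susp {W : Type*} (H : SimpleGraph W) : SimpleGraph (Option W) where
  Adj a b :=
    match a, b with
    | some x, some y => H.Adj x y
    | some _, none => True
    | none, some _ => True
    | none, none => False
  symm := by
    constructor
    rintro (_ | x) (_ | y) h
    · exact h
    · trivial
    · trivial
    · exact h.symm
  loopless := by
    constructor
    rintro (_ | x) h
    · exact h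
    · exact H.irrefl h

/-- The Turán number: maximum number of edges of an `H`-free graph on `n` vertices. -/
noncomputable def exNum (n : ℕ) {W : Type*} (H : SimpleGraph W) : ℕ :=
  sSup {m | ∃ G : SimpleGraph (Fin n), ¬ containsCopy H G ∧ edgeCount G = m}

/-- The codegree of the pair `a, b`: number of common neighbours. -/
noncomputable def codeg {V : Type*} (G : SimpleGraph V) (a b : V) : ℕ :=
  (G.neighborSet a ∩ G.neighborSet b).ncard

open Finset

lemma pair_finset_eq {V : Type*} [DecidableEq V] {a b c d : V} (hab : a ≠ b)
    (h : ({a, b} : Finset V) = {c, d}) : s(a, b) = s(c, d) := by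
  have ha : a = c ∨ a = d := by
    have : a ∈ ({c, d} : Finset V) := h ▸ (by simp)
    simpa using this
  have hb : b = c ∨ b = d := by
    have : b ∈ ({c, d} : Finset V) := h ▸ (by simp)
    simpa using this
  rcases ha with rfl | rfl <;> rcases hb with rfl | rfl
  · exact absurd rfl hab
  · rfl
  · exact Sym2.eq_swap
  · exact absurd rfl hab


section KeyCount
variable {V : Type*} [Fintype V] [DecidableEq V] (G : SimpleGraph V) [DecidableRel G.Adj]

lemma key_count :
    ∑ v, G.degree v ^ 2 ≤ 3 * (G.cliqueFinset 3).card + Fintype.card V * G.edgeFinset.card := by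
  classical
  set T := G.cliqueFinset 3 with hTdef
  set E := G.edgeFinset with hEdef
  -- step 1 : sum of degrees squared as a sum over edges
  have step1 : ∑ v, G.degree v ^ 2 = ∑ m ∈ E, ∑ v ∈ univ.filter (· ∈ m), G.degree v := by
    simp_rw [sum_filter]
    rw [Finset.sum_comm]
    refine Finset.sum_congr rfl fun v _ => ?_
    rw [← sum_filter, ← G.incidenceFinset_eq_filter v, sum_const,
      card_incidenceFinset_eq_degree, smul_eq_mul, sq]
  -- step 2 : per-edge bound
  have step2 : ∀ m ∈ E, ∑ v ∈ univ.filter (· ∈ m), G.degree v ≤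
      (T.filter (fun s => ∀ x ∈ m, x ∈ s)).card + Fintype.card V := by
    intro m
    induction m using Sym2.ind with
    | _ u v =>
      intro hm
      have huv : G.Adj u v := by rwa [hEdef, mem_edgeFinset, mem_edgeSet] at hm
      have hne : u ≠ v := G.ne_of_adj huv
      have hfil : univ.filter (· ∈ s(u, v)) = {u, v} := by
        ext x; simp [Sym2.mem_iff]
      rw [hfil, sum_pair hne]
      have hfil2 : T.filter (fun s => ∀ x ∈ s(u, v), x ∈ s)
          = T.filter (fun s => u ∈ s ∧ v ∈ s) := by
        apply filter_congr; intro s _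
        simp [Sym2.mem_iff, forall_eq_or_imp]
      rw [hfil2]
      have h1 : G.degree u + G.degree v ≤
          (G.neighborFinset u ∩ G.neighborFinset v).card + Fintype.card V := by
        rw [← card_neighborFinset_eq_degree, ← card_neighborFinset_eq_degree,
          ← Finset.card_union_add_card_inter]
        have := Finset.card_le_univ (G.neighborFinset u ∪ G.neighborFinset v)
        omega
      refine h1.trans (Nat.add_le_add_right ?_ _)
      apply Finset.card_le_card_of_injOn (fun w => {u, v, w})
      · intro w hw
        rw [mem_coe, Finset.mem_inter, mem_neighborFinset, mem_neighborFinset] at hw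
        simp only [mem_coe, mem_filter, hTdef, mem_cliqueFinset_iff]
        exact ⟨is3Clique_triple_iff.2 ⟨huv, hw.1, hw.2⟩, by simp, by simp⟩
      · intro a ha b hb hab
        rw [mem_coe, Finset.mem_inter, mem_neighborFinset, mem_neighborFinset] at ha hb
        have hau : a ≠ u := fun h => G.irrefl (h ▸ ha.1)
        have hav : a ≠ v := fun h => G.irrefl (h ▸ ha.2)
        simp only [] at hab
        have : a ∈ ({u, v, b} : Finset V) := by rw [← hab]; simp
        simp only [Finset.mem_insert, Finset.mem_singleton] at this
        tauto
  -- step 3 : double counting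
  have step3 : ∑ m ∈ E, (T.filter (fun s => ∀ x ∈ m, x ∈ s)).card ≤ 3 * T.card := by
    have hswap : ∑ m ∈ E, (T.filter (fun s => ∀ x ∈ m, x ∈ s)).card
        = ∑ s ∈ T, (E.filter (fun m => ∀ x ∈ m, x ∈ s)).card := by
      simp_rw [card_filter]
      exact Finset.sum_comm
    rw [hswap]
    have hper : ∀ s ∈ T, (E.filter (fun m => ∀ x ∈ m, x ∈ s)).card ≤ 3 := by
      intro s hs
      have hcard : s.card = 3 := (mem_cliqueFinset_iff.mp hs).2
      have h3 : (s.powersetCard 2).card = 3 := by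
        rw [Finset.card_powersetCard, hcard]
        rfl
      rw [← h3]
      apply Finset.card_le_card_of_injOn
        (fun m => Sym2.lift ⟨fun a b => ({a, b} : Finset V), fun a b => Finset.pair_comm a b⟩ m)
      · intro m
        induction m using Sym2.ind with
        | _ u v =>
          intro hm
          rw [mem_coe, mem_filter] at hm
          obtain ⟨hmE, hsub⟩ := hm
          have huv : G.Adj u v := by rwa [hEdef, mem_edgeFinset, mem_edgeSet] at hmE
          simp only [Sym2.lift_mk, mem_coe, Finset.mem_powersetCard]
          constructor
          · intro x hx
            simp only [Finset.mem_insert, Finset.mem_singleton] at hx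
            rcases hx with rfl | rfl
            · exact hsub x (by simp)
            · exact hsub x (by simp)
          · exact Finset.card_pair (G.ne_of_adj huv)
      · intro m hm m' hm' heq
        induction m using Sym2.ind with
        | _ u v =>
          induction m' using Sym2.ind with
          | _ u' v' =>
            rw [mem_coe, mem_filter] at hm
            have huv : G.Adj u v := by
              have := hm.1; rwa [hEdef, mem_edgeFinset, mem_edgeSet] at this
            simp only [Sym2.lift_mk] at heq
            exact pair_finset_eq (G.ne_of_adj huv) heq
    calc ∑ s ∈ T, (E.filter (fun m => ∀ x ∈ m, x ∈ s)).card ≤ ∑ _s ∈ T, 3 :=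
          Finset.sum_le_sum hper
      _ = 3 * T.card := by rw [sum_const, smul_eq_mul, mul_comm]
  calc ∑ v, G.degree v ^ 2 = ∑ m ∈ E, ∑ v ∈ univ.filter (· ∈ m), G.degree v := step1
    _ ≤ ∑ m ∈ E, ((T.filter (fun s => ∀ x ∈ m, x ∈ s)).card + Fintype.card V) :=
        Finset.sum_le_sum step2
    _ = (∑ m ∈ E, (T.filter (fun s => ∀ x ∈ m, x ∈ s)).card) + E.card * Fintype.card V := by
        rw [Finset.sum_add_distrib, sum_const, smul_eq_mul]
    _ ≤ 3 * T.card + E.card * Fintype.card V := by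
        have := step3; omega
    _ = 3 * T.card + Fintype.card V * E.card := by ring

end KeyCount

/-- Nordhaus–Stewart: `t(G) ≥ (e(G)/(3n))·(4e(G) − n²)`. -/
theorem nordhaus_stewart {V : Type*} [Fintype V] [Nonempty V] (G : SimpleGraph V) :
    ((edgeCount G : ℝ) / (3 * Fintype.card V)) *
      (4 * (edgeCount G : ℝ) - (Fintype.card V : ℝ) ^ 2) ≤ (triCount G : ℝ) := by
  classical
  have hT : triCount G = (G.cliqueFinset 3).card := by
    rw [triCount, ← Set.ncard_coe_finset]
    congr 1
    ext s
    simp [mem_cliqueFinset_iff]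
  have hE : edgeCount G = G.edgeFinset.card := by
    rw [edgeCount, ← coe_edgeFinset, Set.ncard_coe_finset]
  set n := Fintype.card V with hn
  set e := G.edgeFinset.card with he
  set t := (G.cliqueFinset 3).card with ht
  have hnpos : (0 : ℝ) < n := by
    have := Fintype.card_pos (α := V)
    positivity
  have hdeg : ∑ v, G.degree v = 2 * e := G.sum_degrees_eq_twice_card_edges
  have hCS : (2 * (e : ℝ)) ^ 2 ≤ (n : ℝ) * ∑ v, (G.degree v : ℝ) ^ 2 := by
    have h := sq_sum_le_card_mul_sum_sq (s := (univ : Finset V))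
      (f := fun v => (G.degree v : ℝ))
    have hsum : ∑ v, (G.degree v : ℝ) = 2 * (e : ℝ) := by
      rw [← Nat.cast_sum, hdeg]; push_cast; ring
    rwa [hsum, Finset.card_univ, ← hn] at h
  have hkey : ∑ v, (G.degree v : ℝ) ^ 2 ≤ 3 * (t : ℝ) + (n : ℝ) * e := by
    have h := key_count G
    calc ∑ v, (G.degree v : ℝ) ^ 2 = ((∑ v, G.degree v ^ 2 : ℕ) : ℝ) := by push_cast; ring
      _ ≤ ((3 * t + n * e : ℕ) : ℝ) := by exact_mod_cast h
      _ = 3 * (t : ℝ) + (n : ℝ) * e := by push_cast; ring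
  rw [hT, hE, div_mul_eq_mul_div, div_le_iff₀ (by positivity)]
  nlinarith [hCS, hkey, hnpos, mul_le_mul_of_nonneg_left hkey (le_of_lt hnpos)]
end

section
/- Let n be divisible by 4. There exists a K_{1,2,2}-free graph on n vertices with at least n^2/4 triangles. Concretely, the graph H_n with parts A, B of size n/2 each, all edges between A and B, and a perfect matching inside each of A and B (so n/4 edges inside each part) is K_{1,2,2}-free and has exactly n^2/4 triangles. -/
open SimpleGraph

/-- For `4 ∣ n` there is a `K_{1,2,2}`-free graph on `n` vertices with at least
`n²/4` triangles. -/
theorem K122_free_lower_bound (n : ℕ) (h4 : 4 ∣ n) :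
    ∃ G : SimpleGraph (Fin n),
      ¬ containsCopy (completeMultipartiteGraph ![Fin 1, Fin 2, Fin 2]) G ∧
      n ^ 2 ≤ 4 * triCount G := by
  obtain ⟨m, hm⟩ := h4
  let G : SimpleGraph (Fin n) := {
    Adj := fun i j => i.val ≠ j.val ∧ (¬(i.val < 2*m ↔ j.val < 2*m) ∨ i.val/2 = j.val/2)
    symm := by constructor; rintro i j ⟨h1, h2⟩; exact ⟨h1.symm, by omega⟩
    loopless := by constructor; rintro i ⟨h1, _⟩; exact h1 rfl }
  have hGadj : ∀ i j : Fin n, G.Adj i j ↔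
      (i.val ≠ j.val ∧ (¬(i.val < 2*m ↔ j.val < 2*m) ∨ i.val/2 = j.val/2)) :=
    fun i j => Iff.rfl
  refine ⟨G, ?_, ?_⟩
  · rintro ⟨f, hf⟩
    let c : (Σ i, ![Fin 1, Fin 2, Fin 2] i) := ⟨0, ((0 : Fin 1) : ![Fin 1, Fin 2, Fin 2] 0)⟩
    let a1 : (Σ i, ![Fin 1, Fin 2, Fin 2] i) := ⟨1, ((0 : Fin 2) : ![Fin 1, Fin 2, Fin 2] 1)⟩
    let a2 : (Σ i, ![Fin 1, Fin 2, Fin 2] i) := ⟨1, ((1 : Fin 2) : ![Fin 1, Fin 2, Fin 2] 1)⟩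
    let b1 : (Σ i, ![Fin 1, Fin 2, Fin 2] i) := ⟨2, ((0 : Fin 2) : ![Fin 1, Fin 2, Fin 2] 2)⟩
    let b2 : (Σ i, ![Fin 1, Fin 2, Fin 2] i) := ⟨2, ((1 : Fin 2) : ![Fin 1, Fin 2, Fin 2] 2)⟩
    have hadj : ∀ x y : (Σ i, ![Fin 1, Fin 2, Fin 2] i), x.1 ≠ y.1 →
        ((f x).val ≠ (f y).val ∧
          (¬((f x).val < 2*m ↔ (f y).val < 2*m) ∨ (f x).val/2 = (f y).val/2)) := by
      intro x y h
      exact (hGadj _ _).1 (f.map_adj (by simpa using h))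
    have hne : ∀ x y : (Σ i, ![Fin 1, Fin 2, Fin 2] i), x ≠ y →
        (f x).val ≠ (f y).val :=
      fun x y h hv => h (hf (Fin.val_injective hv))
    have h1 := hadj c a1 (by simp [c, a1])
    have h2 := hadj c a2 (by simp [c, a2])
    have h3 := hadj c b1 (by simp [c, b1])
    have h4 := hadj c b2 (by simp [c, b2])
    have h5 := hadj a1 b1 (by simp [a1, b1])
    have h6 := hadj a1 b2 (by simp [a1, b2])
    have h7 := hadj a2 b1 (by simp [a2, b1])
    have h8 := hadj a2 b2 (by simp [a2, b2])
    have d1 : a1 ≠ a2 := fun h => by simp only [a1, a2, Sigma.mk.inj_iff, heq_eq_eq] at h; exact absurd ((eq_of_heq (Sigma.mk.inj_iff.mp h).2 : (0:Fin 2) = 1)) (show ¬(0:Fin 2) = 1 by decide)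
    have d2 : b1 ≠ b2 := fun h => by simp only [b1, b2, Sigma.mk.inj_iff, heq_eq_eq] at h; exact absurd ((eq_of_heq (Sigma.mk.inj_iff.mp h).2 : (0:Fin 2) = 1)) (show ¬(0:Fin 2) = 1 by decide)
    have e1 := hne _ _ d1
    have e2 := hne _ _ d2
    omega
  · -- triangle count
    have key : ∀ k v : Fin (2*m), G.IsNClique 3
        ({⟨2*k.val, by have := k.isLt; omega⟩, ⟨2*k.val+1, by have := k.isLt; omega⟩,
          ⟨(if k.val < m then 2*m + v.val else v.val),
            by have := v.isLt; split <;> omega⟩} : Finset (Fin n)) := by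
      intro k v
      rw [is3Clique_triple_iff]
      have hk := k.isLt; have hv := v.isLt
      refine ⟨(hGadj _ _).2 ?_, (hGadj _ _).2 ?_, (hGadj _ _).2 ?_⟩ <;>
        simp only [] <;> (try split_ifs) <;> omega
    set φ : Fin (2*m) × Fin (2*m) → Finset (Fin n) := fun p =>
      ({⟨2*p.1.val, by have := p.1.isLt; omega⟩, ⟨2*p.1.val+1, by have := p.1.isLt; omega⟩,
        ⟨(if p.1.val < m then 2*m + p.2.val else p.2.val),
          by have := p.2.isLt; split <;> omega⟩} : Finset (Fin n)) with hφ
    have hinj : Function.Injective φ := by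
      rintro ⟨k, v⟩ ⟨k', v'⟩ heq
      simp only [hφ] at heq
      have hmem1 : (⟨2*k.val, by have := k.isLt; omega⟩ : Fin n) ∈
          ({⟨2*k'.val, by have := k'.isLt; omega⟩, ⟨2*k'.val+1, by have := k'.isLt; omega⟩,
            ⟨(if k'.val < m then 2*m + v'.val else v'.val),
              by have := v'.isLt; split <;> omega⟩} : Finset (Fin n)) := by
        rw [← heq]; simp
      have hmem2 : (⟨2*k.val+1, by have := k.isLt; omega⟩ : Fin n) ∈
          ({⟨2*k'.val, by have := k'.isLt; omega⟩, ⟨2*k'.val+1, by have := k'.isLt; omega⟩,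
            ⟨(if k'.val < m then 2*m + v'.val else v'.val),
              by have := v'.isLt; split <;> omega⟩} : Finset (Fin n)) := by
        rw [← heq]; simp
      have hmem3 : (⟨(if k.val < m then 2*m + v.val else v.val),
              by have := v.isLt; split <;> omega⟩ : Fin n) ∈
          ({⟨2*k'.val, by have := k'.isLt; omega⟩, ⟨2*k'.val+1, by have := k'.isLt; omega⟩,
            ⟨(if k'.val < m then 2*m + v'.val else v'.val),
              by have := v'.isLt; split <;> omega⟩} : Finset (Fin n)) := by
        rw [← heq]; simp
      simp only [Finset.mem_insert, Finset.mem_singleton, Fin.ext_iff] at hmem1 hmem2 hmem3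
      have hk := k.isLt; have hv := v.isLt; have hk' := k'.isLt; have hv' := v'.isLt
      have : k.val = k'.val ∧ v.val = v'.val := by
        split_ifs at hmem1 hmem2 hmem3 <;> omega
      exact Prod.ext (Fin.ext this.1) (Fin.ext this.2)
    have hsub : ↑(Finset.image φ Finset.univ) ⊆ {s : Finset (Fin n) | G.IsNClique 3 s} := by
      intro s hs
      simp only [Finset.coe_image, Set.mem_image, Finset.mem_coe, Finset.mem_univ] at hs
      obtain ⟨⟨k, v⟩, _, rfl⟩ := hs
      exact key k v
    have hcard : (Finset.image φ Finset.univ).card = 2*m * (2*m) := by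
      rw [Finset.card_image_of_injective _ hinj]
      simp
    have hle : (Finset.image φ Finset.univ).card ≤ triCount G := by
      rw [triCount, ← Set.ncard_coe_finset]
      exact Set.ncard_le_ncard hsub (Set.toFinite _)
    have h2 : 2*m*(2*m) ≤ triCount G := hcard ▸ hle
    nlinarith [h2]
end

section
/- If a graph G contains no copy of \widehat{P}_4 (suspension of the 4-edge path) and no K_5 minus an edge, then any two copies of K_4 in G are edge-disjoint. -/
open SimpleGraph

/-- Five vertices, pairwise distinct and pairwise adjacent except possibly the
first two, give a copy of `K_5^-`. -/
lemma copy_K5m {V : Type*} {G : SimpleGraph V} (v0 v1 v2 v3 v4 : V)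
    (h01 : v0 ≠ v1) (h02 : v0 ≠ v2) (h03 : v0 ≠ v3) (h04 : v0 ≠ v4)
    (h12 : v1 ≠ v2) (h13 : v1 ≠ v3) (h14 : v1 ≠ v4)
    (h23 : v2 ≠ v3) (h24 : v2 ≠ v4) (h34 : v3 ≠ v4)
    (a02 : G.Adj v0 v2) (a03 : G.Adj v0 v3) (a04 : G.Adj v0 v4)
    (a12 : G.Adj v1 v2) (a13 : G.Adj v1 v3) (a14 : G.Adj v1 v4)
    (a23 : G.Adj v2 v3) (a24 : G.Adj v2 v4) (a34 : G.Adj v3 v4) :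
    containsCopy ((⊤ : SimpleGraph (Fin 5)).deleteEdges {s(0, 1)}) G := by
  refine ⟨⟨![v0,v1,v2,v3,v4], ?_⟩, ?_⟩
  · intro i j hij
    simp only [deleteEdges_adj, top_adj, Set.mem_singleton_iff] at hij
    fin_cases i <;> fin_cases j <;>
      first
        | exact absurd rfl hij.1
        | exact absurd rfl hij.2
        | exact absurd Sym2.eq_swap hij.2
        | exact a02 | exact a03 | exact a04 | exact a12 | exact a13 | exact a14
        | exact a23 | exact a24 | exact a34
        | exact a02.symm | exact a03.symm | exact a04.symm | exact a12.symm
        | exact a13.symm | exact a14.symm | exact a23.symm | exact a24.symm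
        | exact a34.symm
  · intro i j hij
    fin_cases i <;> fin_cases j <;> first
      | rfl
      | exact absurd hij h01 | exact absurd hij h02 | exact absurd hij h03
      | exact absurd hij h04 | exact absurd hij h12 | exact absurd hij h13
      | exact absurd hij h14 | exact absurd hij h23 | exact absurd hij h24
      | exact absurd hij h34
      | exact absurd hij.symm h01 | exact absurd hij.symm h02
      | exact absurd hij.symm h03 | exact absurd hij.symm h04
      | exact absurd hij.symm h12 | exact absurd hij.symm h13
      | exact absurd hij.symm h14 | exact absurd hij.symm h23
      | exact absurd hij.symm h24 | exact absurd hij.symm h34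

/-- An apex adjacent to five distinct vertices forming a path gives a copy of
the suspension of `P_4`. -/
lemma copy_suspP4 {V : Type*} {G : SimpleGraph V} (a p0 p1 p2 p3 p4 : V)
    (ha0 : a ≠ p0) (ha1 : a ≠ p1) (ha2 : a ≠ p2) (ha3 : a ≠ p3) (ha4 : a ≠ p4)
    (h01 : p0 ≠ p1) (h02 : p0 ≠ p2) (h03 : p0 ≠ p3) (h04 : p0 ≠ p4)
    (h12 : p1 ≠ p2) (h13 : p1 ≠ p3) (h14 : p1 ≠ p4)
    (h23 : p2 ≠ p3) (h24 : p2 ≠ p4) (h34 : p3 ≠ p4)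
    (b0 : G.Adj a p0) (b1 : G.Adj a p1) (b2 : G.Adj a p2) (b3 : G.Adj a p3)
    (b4 : G.Adj a p4)
    (e01 : G.Adj p0 p1) (e12 : G.Adj p1 p2) (e23 : G.Adj p2 p3)
    (e34 : G.Adj p3 p4) :
    containsCopy (susp (pathGraph 5)) G := by
  refine ⟨⟨fun o => o.elim a ![p0,p1,p2,p3,p4], ?_⟩, ?_⟩
  · rintro (_ | i) (_ | j) h
    · exact h.elim
    · fin_cases j
      · exact b0
      · exact b1
      · exact b2
      · exact b3
      · exact b4
    · fin_cases i
      · exact b0.symm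
      · exact b1.symm
      · exact b2.symm
      · exact b3.symm
      · exact b4.symm
    · replace h : (pathGraph 5).Adj i j := h
      rw [pathGraph_adj] at h
      fin_cases i <;> fin_cases j <;>
        first
          | exact absurd h (by decide)
          | exact e01 | exact e12 | exact e23 | exact e34
          | exact e01.symm | exact e12.symm | exact e23.symm | exact e34.symm
  · rintro (_ | i) (_ | j) hij
    · rfl
    · exfalso; fin_cases j <;> first
        | exact ha0 hij | exact ha1 hij | exact ha2 hij | exact ha3 hij
        | exact ha4 hij
    · exfalso; fin_cases i <;> first
        | exact ha0 hij.symm | exact ha1 hij.symm | exact ha2 hij.symm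
        | exact ha3 hij.symm | exact ha4 hij.symm
    · fin_cases i <;> fin_cases j <;> first
        | rfl
        | exact absurd hij h01 | exact absurd hij h02 | exact absurd hij h03
        | exact absurd hij h04 | exact absurd hij h12 | exact absurd hij h13
        | exact absurd hij h14 | exact absurd hij h23 | exact absurd hij h24
        | exact absurd hij h34
        | exact absurd hij.symm h01 | exact absurd hij.symm h02
        | exact absurd hij.symm h03 | exact absurd hij.symm h04
        | exact absurd hij.symm h12 | exact absurd hij.symm h13
        | exact absurd hij.symm h14 | exact absurd hij.symm h23
        | exact absurd hij.symm h24 | exact absurd hij.symm h34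

/-- In a `\widehat{P}_4`-free, `K_5^-`-free graph, any two distinct copies of
`K_4` are edge-disjoint (they share at most one vertex). -/
theorem K4_copies_edge_disjoint {V : Type*} [DecidableEq V] (G : SimpleGraph V)
    (hP4 : ¬ containsCopy (susp (pathGraph 5)) G)
    (hK5m : ¬ containsCopy ((⊤ : SimpleGraph (Fin 5)).deleteEdges {s(0, 1)}) G) :
    ∀ s t : Finset V, G.IsNClique 4 s → G.IsNClique 4 t → s ≠ t →
      (s ∩ t).card ≤ 1 := by
  intro s t hs ht hst
  by_contra hcon
  push_neg at hcon
  have adjs : ∀ {x y : V}, x ∈ s → y ∈ s → x ≠ y → G.Adj x y :=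
    fun hx hy hxy => hs.1 (Finset.mem_coe.mpr hx) (Finset.mem_coe.mpr hy) hxy
  have adjt : ∀ {x y : V}, x ∈ t → y ∈ t → x ≠ y → G.Adj x y :=
    fun hx hy hxy => ht.1 (Finset.mem_coe.mpr hx) (Finset.mem_coe.mpr hy) hxy
  have hc4 : (s ∩ t).card ≤ 4 :=
    hs.2 ▸ Finset.card_le_card Finset.inter_subset_left
  have hsd : (s \ t).card + (s ∩ t).card = 4 := by
    rw [Finset.card_sdiff_add_card_inter]; exact hs.2
  have htd : (t \ s).card + (s ∩ t).card = 4 := by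
    rw [Finset.inter_comm, Finset.card_sdiff_add_card_inter]; exact ht.2
  have hne4 : (s ∩ t).card ≠ 4 := by
    intro h4
    have h1 : s ∩ t = s :=
      Finset.eq_of_subset_of_card_le Finset.inter_subset_left
        (le_of_eq (hs.2.trans h4.symm))
    have h2 : s ∩ t = t :=
      Finset.eq_of_subset_of_card_le Finset.inter_subset_right
        (le_of_eq (ht.2.trans h4.symm))
    exact hst (h1 ▸ h2)
  have hcases : (s ∩ t).card = 2 ∨ (s ∩ t).card = 3 := by omega
  rcases hcases with h2 | h3
  · -- |s ∩ t| = 2 : build a copy of the suspension of P4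
    obtain ⟨a, b, hab, hiab⟩ := Finset.card_eq_two.mp h2
    have hcd : (s \ t).card = 2 := by omega
    have hef : (t \ s).card = 2 := by omega
    obtain ⟨c, d, hcd', hscd⟩ := Finset.card_eq_two.mp hcd
    obtain ⟨e, f, hef', htef⟩ := Finset.card_eq_two.mp hef
    have ha : a ∈ s ∩ t := hiab ▸ Finset.mem_insert_self a {b}
    have hb : b ∈ s ∩ t := hiab ▸ Finset.mem_insert_of_mem (Finset.mem_singleton_self b)
    have has : a ∈ s := (Finset.mem_inter.mp ha).1
    have hat : a ∈ t := (Finset.mem_inter.mp ha).2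
    have hbs : b ∈ s := (Finset.mem_inter.mp hb).1
    have hbt : b ∈ t := (Finset.mem_inter.mp hb).2
    have hc : c ∈ s \ t := hscd ▸ Finset.mem_insert_self c {d}
    have hd : d ∈ s \ t := hscd ▸ Finset.mem_insert_of_mem (Finset.mem_singleton_self d)
    have he : e ∈ t \ s := htef ▸ Finset.mem_insert_self e {f}
    have hf : f ∈ t \ s := htef ▸ Finset.mem_insert_of_mem (Finset.mem_singleton_self f)
    have hcs : c ∈ s := (Finset.mem_sdiff.mp hc).1
    have hcnt : c ∉ t := (Finset.mem_sdiff.mp hc).2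
    have hds : d ∈ s := (Finset.mem_sdiff.mp hd).1
    have hdnt : d ∉ t := (Finset.mem_sdiff.mp hd).2
    have het : e ∈ t := (Finset.mem_sdiff.mp he).1
    have hens : e ∉ s := (Finset.mem_sdiff.mp he).2
    have hft : f ∈ t := (Finset.mem_sdiff.mp hf).1
    have hfns : f ∉ s := (Finset.mem_sdiff.mp hf).2
    -- distinctness
    have hac : a ≠ c := fun h => hcnt (h ▸ hat)
    have had : a ≠ d := fun h => hdnt (h ▸ hat)
    have hae : a ≠ e := fun h => hens (h ▸ has)
    have haf : a ≠ f := fun h => hfns (h ▸ has)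
    have hbc : b ≠ c := fun h => hcnt (h ▸ hbt)
    have hbd : b ≠ d := fun h => hdnt (h ▸ hbt)
    have hbe : b ≠ e := fun h => hens (h ▸ hbs)
    have hbf : b ≠ f := fun h => hfns (h ▸ hbs)
    have hce : c ≠ e := fun h => hens (h ▸ hcs)
    have hcf : c ≠ f := fun h => hfns (h ▸ hcs)
    have hde : d ≠ e := fun h => hens (h ▸ hds)
    have hdf : d ≠ f := fun h => hfns (h ▸ hds)
    exact hP4 (copy_suspP4 a c d b e f
      hac had hab hae haf
      hcd' hbc.symm hce hcf hbd.symm hde hdf hbe hbf hef'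
      (adjs has hcs hac) (adjs has hds had) (adjs has hbs hab)
      (adjt hat het hae) (adjt hat hft haf)
      (adjs hcs hds hcd') (adjs hds hbs hbd.symm)
      (adjt hbt het hbe) (adjt het hft hef'))
  · -- |s ∩ t| = 3 : build a copy of K5 minus an edge
    obtain ⟨x, y, z, hxy, hxz, hyz, hixyz⟩ := Finset.card_eq_three.mp h3
    have hu1 : (s \ t).card = 1 := by omega
    have hv1 : (t \ s).card = 1 := by omega
    obtain ⟨u, hu⟩ := Finset.card_eq_one.mp hu1
    obtain ⟨v, hv⟩ := Finset.card_eq_one.mp hv1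
    have hums : u ∈ s \ t := hu ▸ Finset.mem_singleton_self u
    have hvmt : v ∈ t \ s := hv ▸ Finset.mem_singleton_self v
    have hus : u ∈ s := (Finset.mem_sdiff.mp hums).1
    have hunt : u ∉ t := (Finset.mem_sdiff.mp hums).2
    have hvt : v ∈ t := (Finset.mem_sdiff.mp hvmt).1
    have hvns : v ∉ s := (Finset.mem_sdiff.mp hvmt).2
    have hx : x ∈ s ∩ t := hixyz ▸ Finset.mem_insert_self x {y, z}
    have hy : y ∈ s ∩ t := hixyz ▸
      Finset.mem_insert_of_mem (Finset.mem_insert_self y {z})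
    have hz : z ∈ s ∩ t := hixyz ▸
      Finset.mem_insert_of_mem (Finset.mem_insert_of_mem (Finset.mem_singleton_self z))
    have hxs : x ∈ s := (Finset.mem_inter.mp hx).1
    have hxt : x ∈ t := (Finset.mem_inter.mp hx).2
    have hys : y ∈ s := (Finset.mem_inter.mp hy).1
    have hyt : y ∈ t := (Finset.mem_inter.mp hy).2
    have hzs : z ∈ s := (Finset.mem_inter.mp hz).1
    have hzt : z ∈ t := (Finset.mem_inter.mp hz).2
    have huv : u ≠ v := fun h => hunt (h ▸ hvt)
    have hux : u ≠ x := fun h => hunt (h ▸ hxt)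
    have huy : u ≠ y := fun h => hunt (h ▸ hyt)
    have huz : u ≠ z := fun h => hunt (h ▸ hzt)
    have hvx : v ≠ x := fun h => hvns (h ▸ hxs)
    have hvy : v ≠ y := fun h => hvns (h ▸ hys)
    have hvz : v ≠ z := fun h => hvns (h ▸ hzs)
    exact hK5m (copy_K5m u v x y z
      huv hux huy huz hvx hvy hvz hxy hxz hyz
      (adjs hus hxs hux) (adjs hus hys huy) (adjs hus hzs huz)
      (adjt hvt hxt hvx) (adjt hvt hyt hvy) (adjt hvt hzt hvz)
      (adjs hxs hys hxy) (adjs hxs hzs hxz) (adjs hys hzs hyz))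
end
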